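/- Let p(x) be a monic polynomial of degree n over ℂ and β₁,…,βₙ pairwise distinct complex numbers. Then p(x) = det(xI - D + e wᵗ), where D = diag(β₁,…,βₙ), e = (1,…,1)ᵗ, and w is the vector with entries wᵢ = p(βᵢ)/∏_{j≠i}(βᵢ - βⱼ). -/

import Mathlib

open Polynomial Matrix Finset

lemma lagrange_decomp (n : ℕ) (p : Polynomial ℂ) (hp : p.Monic) (hdeg : p.natDegree = n)
    (β : Fin n → ℂ) (hβ : Function.Injective β) :
    p = (∏ i, (X - C (β i))) +
      ∑ j, C (p.eval (β j) / ∏ k ∈ univ.erase j, (β j - β k)) *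
        ∏ k ∈ univ.erase j, (X - C (β k)) := by
  set q : Polynomial ℂ := ∏ i, (X - C (β i)) with hq
  have hqm : q.Monic := monic_prod_of_monic _ _ fun i _ => monic_X_sub_C (β i)
  have hqdeg : q.natDegree = n := by
    rw [hq, natDegree_prod_of_monic _ _ (fun i _ => monic_X_sub_C (β i))]
    simp [natDegree_X_sub_C]
  have hdq : p.degree = q.degree := by
    rw [degree_eq_natDegree hp.ne_zero, degree_eq_natDegree hqm.ne_zero, hdeg, hqdeg]
  have hr : (p - q).degree < (n : WithBot ℕ) := by
    have h := degree_sub_lt hdq hp.ne_zero (by rw [hp.leadingCoeff, hqm.leadingCoeff])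
    rwa [degree_eq_natDegree hp.ne_zero, hdeg] at h
  have key := Lagrange.eq_interpolate (s := univ) (v := β) (f := p - q)
    (hβ.injOn) (by simpa using hr)
  have hqeval : ∀ j : Fin n, q.eval (β j) = 0 := by
    intro j
    simp only [hq, eval_prod]
    exact Finset.prod_eq_zero (mem_univ j) (by simp)
  rw [Lagrange.interpolate_apply] at key
  have heq : ∀ i : Fin n, (p - q).eval (β i) = p.eval (β i) := by
    intro i; simp [hqeval i]
  simp_rw [heq] at key
  have hpq : p = q + ∑ x : Fin n, C (eval (β x) p) * Lagrange.basis univ β x := by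
    rw [← key]; ring
  conv_lhs => rw [hpq]
  congr 1
  apply Finset.sum_congr rfl
  intro j _
  rw [Lagrange.basis]
  simp only [Lagrange.basisDivisor]
  rw [Finset.prod_mul_distrib, ← map_prod, ← mul_assoc, ← _root_.map_mul,
    Finset.prod_inv_distrib, ← div_eq_mul_inv]


/-- secular representation `p(x) = det(xI - D + e wᵗ)` of a monic
scalar polynomial, with `D = diag(β₁,…,βₙ)` and `wᵢ = p(βᵢ)/∏_{j≠i}(βᵢ-βⱼ)`. -/
theorem secular_det_representation (n : ℕ) (p : Polynomial ℂ)
    (hp : p.Monic) (hdeg : p.natDegree = n)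
    (β : Fin n → ℂ) (hβ : Function.Injective β) :
    p = Matrix.det
      ((Polynomial.X : Polynomial ℂ) • (1 : Matrix (Fin n) (Fin n) (Polynomial ℂ))
        - Matrix.diagonal (fun i => Polynomial.C (β i))
        + Matrix.of (fun i j : Fin n =>
            Polynomial.C (p.eval (β j) /
              (Finset.univ.erase j).prod (fun k => β j - β k)))) := by
  set w : Fin n → ℂ := fun j => p.eval (β j) / ∏ k ∈ univ.erase j, (β j - β k) with hw
  have hM : ((Polynomial.X : Polynomial ℂ) • (1 : Matrix (Fin n) (Fin n) (Polynomial ℂ))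
        - Matrix.diagonal (fun i => Polynomial.C (β i))
        + Matrix.of (fun i j : Fin n => Polynomial.C (w j)))
      = diagonal (fun i => (X : ℂ[X]) - C (β i))
        + replicateCol Unit (fun _ => (1:ℂ[X])) * replicateRow Unit (fun j => C (w j)) := by
    ext i j
    by_cases h : i = j <;>
      simp [h, Matrix.mul_apply, Matrix.replicateCol_apply, Matrix.replicateRow_apply,
        Matrix.diagonal_apply, Matrix.one_apply, Matrix.smul_apply]
  rw [hM]
  let K := RatFunc ℂ
  let φ : ℂ[X] →+* K := algebraMap ℂ[X] K
  have hφ : Function.Injective φ := IsFractionRing.injective _ _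
  have hd : ∀ i : Fin n, φ ((X : ℂ[X]) - C (β i)) ≠ 0 := fun i => by
    rw [Ne, map_eq_zero_iff φ hφ]
    exact X_sub_C_ne_zero _
  apply hφ
  rw [RingHom.map_det, RingHom.mapMatrix_apply, Matrix.map_add _ (map_add φ), Matrix.map_mul,
    Matrix.diagonal_map (map_zero φ)]
  have hcol : (replicateCol Unit (fun _ : Fin n => (1:ℂ[X]))).map φ = replicateCol Unit (fun _ : Fin n => (1:K)) := by
    ext i j; simp [Matrix.replicateCol_apply]
  have hrow : (replicateRow Unit (fun j : Fin n => C (w j))).map φ = replicateRow Unit (fun j : Fin n => φ (C (w j))) := by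
    ext i j; simp [Matrix.replicateRow_apply]
  rw [hcol, hrow]
  have hA : IsUnit (diagonal (fun i => φ ((X:ℂ[X]) - C (β i)))).det := by
    rw [det_diagonal, isUnit_iff_ne_zero]
    exact Finset.prod_ne_zero_iff.mpr fun i _ => hd i
  have hAinv : (diagonal (fun i => φ ((X:ℂ[X]) - C (β i))))⁻¹
      = diagonal (fun i => (φ ((X:ℂ[X]) - C (β i)))⁻¹) := by
    apply Matrix.inv_eq_right_inv
    have h1 : (fun i => φ ((X:ℂ[X]) - C (β i)) * (φ ((X:ℂ[X]) - C (β i)))⁻¹) = fun _ => (1:K) := by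
      funext i; exact mul_inv_cancel₀ (hd i)
    rw [diagonal_mul_diagonal, h1, diagonal_one]
  rw [Matrix.det_add_replicateCol_mul_replicateRow hA]
  rw [det_diagonal, hAinv, det_unique]
  simp only [Matrix.add_apply, Matrix.mul_apply, Matrix.replicateRow_apply, Matrix.replicateCol_apply,
    Matrix.one_apply_eq, Matrix.diagonal_apply, Ring.inverse_eq_inv',
    Finset.univ_unique, Finset.sum_singleton, mul_one, mul_ite, mul_zero, ite_mul, zero_mul,
    Finset.sum_ite_eq, Finset.mem_univ, if_true]
  conv_lhs => rw [lagrange_decomp n p hp hdeg β hβ]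
  rw [map_add, map_prod, map_sum, mul_add, mul_one, Finset.mul_sum]
  congr 1
  apply Finset.sum_congr rfl
  intro j _
  rw [_root_.map_mul, map_prod]
  simp only [Finset.sum_ite_eq', Finset.mem_univ, if_true, Ring.inverse_eq_inv']
  rw [← Finset.mul_prod_erase univ (fun i => φ (X - C (β i))) (mem_univ j)]
  simp only [hw]
  field_simp [hd j]
  have h2 : φ X - φ (C (β j)) ≠ 0 := by rw [← map_sub]; exact hd j
  linear_combination (-(φ (C (eval (β j) p / ∏ k ∈ univ.erase j, (β j - β k))) * ∏ x ∈ univ.erase j, φ (X - C (β x)))) * mul_inv_cancel₀ (hd j)
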